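/- Let ϕᵢ solve the Riccati differential equation dϕᵢ/dτ = −γᵢ((1/(αᵢσᵢ))ϕᵢ² + 1) with ϕᵢ(0) = 1/λᵢ, where γᵢ > 0, αᵢσᵢ > 0 and λᵢ ∈ (0,1). Then ϕᵢ is strictly decreasing and ϕᵢ(τ) = λᵢ exactly at τ = −(√(αᵢσᵢ)/γᵢ) · arctan( (λᵢ²−1)√(αᵢσᵢ) / (λᵢ(αᵢσᵢ+1)) ), which is a strictly positive number. -/

import Mathlib

open Real

/-- The clock function `ϕ` solving `ϕ' = −γ((1/(ασ))ϕ² + 1)`, `ϕ(0) = 1/λ`, with `γ > 0`,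
`ασ > 0`, `λ ∈ (0,1)`, is strictly decreasing on `[0,T]`, and reaches the value `λ`
exactly at `τ_MIET = −(√(ασ)/γ)·arctan((λ²−1)√(ασ)/(λ(ασ+1)))`, which is strictly
positive. -/
theorem clock_miet (γ asig lam T : ℝ) (hγ : 0 < γ) (hasig : 0 < asig)
    (hlam0 : 0 < lam) (hlam1 : lam < 1) (hT : 0 < T)
    (ϕ : ℝ → ℝ) (hϕ0 : ϕ 0 = 1 / lam)
    (hode : ∀ τ ∈ Set.Icc 0 T,
      HasDerivAt ϕ (-(γ * ((1 / asig) * (ϕ τ) ^ 2 + 1))) τ)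
    (τMIET : ℝ)
    (hτMIET : τMIET =
      -(Real.sqrt asig / γ) *
        Real.arctan ((lam ^ 2 - 1) * Real.sqrt asig / (lam * (asig + 1))))
    (hTle : τMIET ≤ T) :
    0 < τMIET ∧ StrictAntiOn ϕ (Set.Icc 0 T) ∧
      (∀ τ ∈ Set.Icc 0 T, (ϕ τ = lam ↔ τ = τMIET)) := by
  set r := Real.sqrt asig with hr_def
  have hr : 0 < r := Real.sqrt_pos.2 hasig
  have hr2 : r ^ 2 = asig := Real.sq_sqrt hasig.le
  have hrne : r ≠ 0 := hr.ne'
  have hlamne : lam ≠ 0 := hlam0.ne'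
  -- the argument of arctan in τMIET is negative
  have hzneg : (lam ^ 2 - 1) * r / (lam * (asig + 1)) < 0 := by
    apply div_neg_of_neg_of_pos
    · have h1 : lam ^ 2 - 1 < 0 := by nlinarith
      exact mul_neg_of_neg_of_pos h1 hr
    · positivity
  have harct_neg : Real.arctan ((lam ^ 2 - 1) * r / (lam * (asig + 1))) < 0 := by
    have := Real.arctan_strictMono hzneg
    simpa using this
  have hpos : 0 < τMIET := by
    rw [hτMIET]
    have h1 : 0 < r / γ := by positivity
    have h2 := mul_pos h1 (neg_pos.2 harct_neg)
    nlinarith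
  -- the clock substitution g = arctan(ϕ/r) + (γ/r)τ has zero derivative
  set g : ℝ → ℝ := fun τ => Real.arctan (ϕ τ / r) + (γ / r) * τ with hg_def
  have hgderiv : ∀ τ ∈ Set.Icc 0 T, HasDerivAt g 0 τ := by
    intro τ hτ
    have h1 : HasDerivAt (fun t => Real.arctan (ϕ t / r))
        ((1 / (1 + (ϕ τ / r) ^ 2)) * (-(γ * ((1 / asig) * (ϕ τ) ^ 2 + 1)) / r)) τ :=
      (Real.hasDerivAt_arctan (ϕ τ / r)).comp τ ((hode τ hτ).div_const r) (h₂ := Real.arctan)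
    have h2 : HasDerivAt (fun t => (γ / r) * t) (γ / r) τ := by
      simpa using (hasDerivAt_id τ).const_mul (γ / r)
    have h3 := h1.add h2
    refine h3.congr_deriv ?_
    have hden : 1 + (ϕ τ / r) ^ 2 ≠ 0 := by positivity
    rw [← hr2]
    field_simp
    ring
  have hgcont : ContinuousOn g (Set.Icc 0 T) := fun τ hτ =>
    (hgderiv τ hτ).continuousAt.continuousWithinAt
  have hgconst : ∀ τ ∈ Set.Icc 0 T, g τ = g 0 := by
    intro τ hτ
    exact constant_of_has_deriv_right_zero hgcont
      (fun x hx => (hgderiv x (Set.Ico_subset_Icc_self hx)).hasDerivWithinAt) τ hτ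
  have hg0 : g 0 = Real.arctan (1 / (lam * r)) := by
    simp only [hg_def, hϕ0, mul_zero, add_zero, div_div]
  have hkey : ∀ τ ∈ Set.Icc 0 T,
      Real.arctan (ϕ τ / r) = Real.arctan (1 / (lam * r)) - (γ / r) * τ := by
    intro τ hτ
    have := hgconst τ hτ
    rw [hg0] at this
    simp only [hg_def] at this
    linarith
  -- strict antitonicity
  have hcont : ContinuousOn ϕ (Set.Icc 0 T) := fun τ hτ =>
    (hode τ hτ).continuousAt.continuousWithinAt
  have hanti : StrictAntiOn ϕ (Set.Icc 0 T) := by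
    apply strictAntiOn_of_deriv_neg (convex_Icc 0 T) hcont
    intro x hx
    rw [interior_Icc] at hx
    rw [(hode x (Set.Ioo_subset_Icc_self hx)).deriv]
    have : 0 < (1 / asig) * (ϕ x) ^ 2 + 1 := by positivity
    nlinarith
  -- arctan subtraction identity
  have hxy : (1 / (lam * r)) * (-(lam / r)) < 1 := by
    have : (1 / (lam * r)) * (lam / r) > 0 := by positivity
    nlinarith
  have hsub : Real.arctan (1 / (lam * r)) - Real.arctan (lam / r) =
      -Real.arctan ((lam ^ 2 - 1) * r / (lam * (asig + 1))) := by
    have h := Real.arctan_add hxy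
    rw [Real.arctan_neg] at h
    have hd : (1 : ℝ) - 1 / (lam * r) * -(lam / r) ≠ 0 := by
      rw [mul_neg, sub_neg_eq_add]
      positivity
    have harg : (1 / (lam * r) + -(lam / r)) / (1 - 1 / (lam * r) * -(lam / r)) =
        -((lam ^ 2 - 1) * r / (lam * (asig + 1))) := by
      have hr1 : (1 + r ^ 2) ≠ 0 := by positivity
      rw [← hr2]
      field_simp
      ring_nf
      field_simp
      ring
    rw [harg, Real.arctan_neg] at h
    linarith
  have hMIET : τMIET = (r / γ) * (Real.arctan (1 / (lam * r)) - Real.arctan (lam / r)) := by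
    rw [hτMIET, hsub]
    ring
  refine ⟨hpos, hanti, fun τ hτ => ?_⟩
  constructor
  · intro h
    have h1 := hkey τ hτ
    rw [h] at h1
    have h2 : (γ / r) * τ = Real.arctan (1 / (lam * r)) - Real.arctan (lam / r) := by
      linarith
    rw [hMIET, ← h2]
    field_simp
  · intro h
    have h1 := hkey τ hτ
    have h2 : (γ / r) * τ =
        Real.arctan (1 / (lam * r)) - Real.arctan (lam / r) := by
      rw [h, hMIET]
      field_simp
    have h3 : Real.arctan (ϕ τ / r) = Real.arctan (lam / r) := by
      rw [h1, h2]; ring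
    have h4 := Real.arctan_injective h3
    field_simp at h4
    exact h4
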